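/- Let Ω : ℝ → Matrix (Fin 2) (Fin 2) ℂ be differentiable with Ω'(s) = ω(s)·Ω(s), where ω(s) is skew-hermitian (ω(s)ᴴ = -ω(s)) for all s, and suppose Ω(0) is unitary. Then Ω(s) is unitary for all s. -/

import Mathlib

open Matrix

theorem unitary_propagation
    (ω Ω : ℝ → Matrix (Fin 2) (Fin 2) ℂ)
    (hωcont : ∀ i j, Continuous fun s => ω s i j)
    (hskew : ∀ s, (ω s)ᴴ = -(ω s))
    (hODE : ∀ s i j, HasDerivAt (fun t => Ω t i j) ((ω s * Ω s) i j) s)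
    (h0 : Ω 0 ∈ Matrix.unitaryGroup (Fin 2) ℂ) :
    ∀ s, (Ω s)ᴴ * Ω s = 1 := by
  have key : ∀ i j s, HasDerivAt (fun t => ((Ω t)ᴴ * Ω t) i j) 0 s := by
    intro i j s
    have h : HasDerivAt (fun t => ((Ω t)ᴴ * Ω t) i j)
        (((ω s * Ω s)ᴴ * Ω s + (Ω s)ᴴ * (ω s * Ω s)) i j) s := by
      have heq : ((ω s * Ω s)ᴴ * Ω s + (Ω s)ᴴ * (ω s * Ω s)) i j
          = ∑ k, (star ((ω s * Ω s) k i) * Ω s k j + star (Ω s k i) * (ω s * Ω s) k j) := by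
        simp [Matrix.add_apply, Matrix.mul_apply, Matrix.conjTranspose_apply,
          Finset.sum_add_distrib]
        ring
      have hfun : (fun t => ((Ω t)ᴴ * Ω t) i j) = fun t => ∑ k, star (Ω t k i) * Ω t k j := by
        funext t
        simp [Matrix.mul_apply, Matrix.conjTranspose_apply]
      rw [heq, hfun]
      exact HasDerivAt.fun_sum fun k _ => ((hODE s k i).star.mul (hODE s k j))
    have hz : ((ω s * Ω s)ᴴ * Ω s + (Ω s)ᴴ * (ω s * Ω s)) = 0 := by
      rw [Matrix.conjTranspose_mul, hskew, Matrix.mul_assoc]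
      simp [Matrix.neg_mul, Matrix.mul_neg]
    rw [hz] at h
    simpa using h
  have hconst : ∀ s i j, ((Ω s)ᴴ * Ω s) i j = ((Ω 0)ᴴ * Ω 0) i j := by
    intro s i j
    have hd : ∀ t : ℝ, deriv (fun t => ((Ω t)ᴴ * Ω t) i j) t = 0 :=
      fun t => (key i j t).deriv
    have hdiff : Differentiable ℝ (fun t => ((Ω t)ᴴ * Ω t) i j) :=
      fun t => (key i j t).differentiableAt
    exact is_const_of_deriv_eq_zero hdiff hd s 0
  intro s
  ext i j
  rw [hconst s i j]
  have h1 : (Ω 0)ᴴ * Ω 0 = 1 := h0.1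
  rw [h1]
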